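/- For integers a ≥ 1 and i ≥ 3, the quantity ∑_{d | i, d odd, d ≠ 1} (2a)^{i/d} is at most 2·(2a)^{i/3}; in particular |(2a)^i g_{a,i} - (2a)^i| ≤ 2(2a)^{i/3}. -/

import Mathlib

/-- `f_{a,i} = (1/(2i)) ∑_{d ∣ i, d odd} μ(d) (2a)^{i/d}`. -/
noncomputable def fai (a i : ℕ) : ℝ :=
  (1 / (2 * (i : ℝ))) * ∑ d ∈ (Nat.divisors i).filter (fun d => Odd d),
    ((ArithmeticFunction.moebius d : ℤ) : ℝ) * (2 * (a : ℝ)) ^ (i / d)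

/-- `g_{a,i} = 2i f_{a,i} / (2a)^i`. -/
noncomputable def gai (a i : ℕ) : ℝ :=
  2 * (i : ℝ) * fai a i / (2 * (a : ℝ)) ^ i

lemma geom_aux (x : ℝ) (hx : 2 ≤ x) (m : ℕ) :
    ∑ e ∈ Finset.range (m + 1), x ^ e ≤ 2 * x ^ m := by
  induction m with
  | zero => norm_num
  | succ m ih =>
    rw [Finset.sum_range_succ]
    have hpow : (0:ℝ) ≤ x ^ m := by positivity
    have : x ^ (m+1) = x * x ^ m := by ring
    nlinarith

/-- For `a ≥ 1` and `i ≥ 3`: `∑_{d ∣ i, d odd, d ≠ 1} (2a)^{i/d} ≤ 2 (2a)^{i/3}`;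
in particular `|(2a)^i g_{a,i} - (2a)^i| ≤ 2 (2a)^{i/3}`. -/
theorem fai_tail_bound (a i : ℕ) (ha : 1 ≤ a) (hi : 3 ≤ i) :
    (∑ d ∈ (Nat.divisors i).filter (fun d => Odd d ∧ d ≠ 1), (2 * (a : ℝ)) ^ (i / d))
        ≤ 2 * (2 * (a : ℝ)) ^ ((i : ℝ) / 3)
      ∧ |(2 * (a : ℝ)) ^ i * gai a i - (2 * (a : ℝ)) ^ i|
        ≤ 2 * (2 * (a : ℝ)) ^ ((i : ℝ) / 3) := by
  set x : ℝ := 2 * (a : ℝ) with hxdef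
  have ha1 : (1:ℝ) ≤ (a:ℝ) := by exact_mod_cast ha
  have hx : 2 ≤ x := by simp [hxdef]; linarith
  have hx1 : 1 ≤ x := by linarith
  have hi0 : i ≠ 0 := by omega
  set S := (Nat.divisors i).filter (fun d => Odd d ∧ d ≠ 1) with hS
  -- main bound
  have key : (∑ d ∈ S, x ^ (i / d)) ≤ 2 * x ^ ((i : ℝ) / 3) := by
    have hinj : ∀ d ∈ S, ∀ d' ∈ S, i / d = i / d' → d = d' := by
      intro d hd d' hd' h
      simp only [hS, Finset.mem_filter, Nat.mem_divisors] at hd hd'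
      have h1 : i / (i / d) = d := Nat.div_div_self hd.1.1 hi0
      have h2 : i / (i / d') = d' := Nat.div_div_self hd'.1.1 hi0
      rw [← h1, ← h2, h]
    have himg : ∑ d ∈ S, x ^ (i / d) = ∑ e ∈ S.image (fun d => i / d), x ^ e :=
      (Finset.sum_image hinj).symm
    have hsub : S.image (fun d => i / d) ⊆ Finset.range (i / 3 + 1) := by
      intro e he
      simp only [Finset.mem_image] at he
      obtain ⟨d, hd, rfl⟩ := he
      simp only [hS, Finset.mem_filter, Nat.mem_divisors] at hd
      have hd3 : 3 ≤ d := by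
        obtain ⟨k, hk⟩ := hd.2.1
        omega
      have : i / d ≤ i / 3 := Nat.div_le_div_left hd3 (by norm_num)
      simp [Finset.mem_range]; omega
    have h1 : ∑ e ∈ S.image (fun d => i / d), x ^ e ≤
        ∑ e ∈ Finset.range (i / 3 + 1), x ^ e := by
      apply Finset.sum_le_sum_of_subset_of_nonneg hsub
      intro e _ _; positivity
    have h2 := geom_aux x hx (i / 3)
    have h3 : x ^ (i / 3 : ℕ) ≤ x ^ ((i : ℝ) / 3) := by
      rw [← Real.rpow_natCast x (i / 3)]
      exact Real.rpow_le_rpow_of_exponent_le hx1 (Nat.cast_div_le.trans (by norm_num))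
    calc ∑ d ∈ S, x ^ (i / d) = ∑ e ∈ S.image (fun d => i / d), x ^ e := himg
      _ ≤ ∑ e ∈ Finset.range (i / 3 + 1), x ^ e := h1
      _ ≤ 2 * x ^ (i / 3 : ℕ) := h2
      _ ≤ 2 * x ^ ((i : ℝ) / 3) := by linarith
  refine ⟨key, ?_⟩
  -- part 2
  have hxi : x ^ i ≠ 0 := by positivity
  have hiR : (i:ℝ) ≠ 0 := Nat.cast_ne_zero.mpr hi0
  have hexp : x ^ i * gai a i =
      ∑ d ∈ (Nat.divisors i).filter (fun d => Odd d),
        ((ArithmeticFunction.moebius d : ℤ) : ℝ) * x ^ (i / d) := by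
    rw [gai, fai]
    field_simp
    rw [← hxdef]
  have h1mem : 1 ∈ (Nat.divisors i).filter (fun d => Odd d) := by
    simp [Nat.mem_divisors, hi0]
  have hsplit : ((Nat.divisors i).filter (fun d => Odd d)).erase 1 = S := by
    ext d
    simp only [hS, Finset.mem_erase, Finset.mem_filter]
    tauto
  have hsum : ∑ d ∈ (Nat.divisors i).filter (fun d => Odd d),
        ((ArithmeticFunction.moebius d : ℤ) : ℝ) * x ^ (i / d)
      = x ^ i + ∑ d ∈ S, ((ArithmeticFunction.moebius d : ℤ) : ℝ) * x ^ (i / d) := by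
    rw [← Finset.add_sum_erase _ _ h1mem, hsplit]
    simp
  rw [hexp, hsum]
  rw [add_sub_cancel_left]
  calc |∑ d ∈ S, ((ArithmeticFunction.moebius d : ℤ) : ℝ) * x ^ (i / d)|
      ≤ ∑ d ∈ S, |((ArithmeticFunction.moebius d : ℤ) : ℝ) * x ^ (i / d)| :=
        Finset.abs_sum_le_sum_abs _ _
    _ ≤ ∑ d ∈ S, x ^ (i / d) := by
        apply Finset.sum_le_sum
        intro d _
        rw [abs_mul]
        have hμ : |((ArithmeticFunction.moebius d : ℤ) : ℝ)| ≤ 1 := by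
          have := ArithmeticFunction.abs_moebius_le_one (n := d)
          exact_mod_cast (by exact_mod_cast this : |((ArithmeticFunction.moebius d : ℤ) : ℝ)| ≤ 1)
        have hp : (0:ℝ) ≤ x ^ (i / d) := by positivity
        rw [abs_of_nonneg hp]
        nlinarith [abs_nonneg ((ArithmeticFunction.moebius d : ℤ) : ℝ)]
    _ ≤ 2 * x ^ ((i : ℝ) / 3) := key
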